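/- For a 𝒯-category X=(X,a) the following are equivalent: (i) X is injective (with respect to fully faithful 𝒯-functors); (ii) the Yoneda functor y_X: X → X̂ has a left inverse, i.e. a 𝒯-functor Sup_X: X̂ → X with Sup_X · y_X ≅ 1_X; (iii) y_X: X → X̂ has a left adjoint; (iv) X is cocomplete. -/

import Mathlib

universe u

namespace Paper

/-- A strict topological theory `𝒯 = (𝕋, V, ξ)`: a commutative unital quantale `V`
(a complete lattice with a commutative monoid structure whose multiplication preserves
suprema in each variable, with `⊥ < k`), a `Set`-monad `𝕋 = (T, e, m)` such that `T`
sends pullbacks to weak pullbacks and the naturality squares of `m` are weak pullbacks,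
and a `𝕋`-algebra structure `ξ : T V → V` for which `⊗` and `k` are `𝕋`-algebra
homomorphisms and `ξ_X := ξ ∘ T(-)` is a (monotone) natural transformation
`P_V → P_V T`. -/
structure TopTheory (V : Type u) [CompleteLattice V] (T : Type u → Type u) where
  tens : V → V → V
  unit : V
  tens_comm : ∀ u v : V, tens u v = tens v u
  tens_assoc : ∀ u v w : V, tens (tens u v) w = tens u (tens v w)
  unit_tens : ∀ v : V, tens unit v = v
  tens_sSup : ∀ (u : V) (S : Set V), tens u (sSup S) = ⨆ v ∈ S, tens u v
  bot_lt_unit : (⊥ : V) < unit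
  map : ∀ {X Y : Type u}, (X → Y) → T X → T Y
  map_id : ∀ {X : Type u}, map (id : X → X) = id
  map_comp : ∀ {X Y Z : Type u} (g : Y → Z) (f : X → Y) (𝔵 : T X),
    map (g ∘ f) 𝔵 = map g (map f 𝔵)
  e : ∀ {X : Type u}, X → T X
  m : ∀ {X : Type u}, T (T X) → T X
  e_nat : ∀ {X Y : Type u} (f : X → Y) (x : X), map f (e x) = e (f x)
  m_nat : ∀ {X Y : Type u} (f : X → Y) (𝔛 : T (T X)), map f (m 𝔛) = m (map (map f) 𝔛)
  m_e : ∀ {X : Type u} (𝔵 : T X), m (e 𝔵) = 𝔵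
  m_map_e : ∀ {X : Type u} (𝔵 : T X), m (map e 𝔵) = 𝔵
  m_assoc : ∀ {X : Type u} (𝔜 : T (T (T X))), m (m 𝔜) = m (map m 𝔜)
  /-- (BC): `T` sends pullbacks to weak pullbacks. -/
  map_bc : ∀ {X Y Z : Type u} (f : X → Z) (g : Y → Z) (𝔵 : T X) (𝔶 : T Y),
    map f 𝔵 = map g 𝔶 →
    ∃ 𝔴 : T {p : X × Y // f p.1 = g p.2},
      map (fun p => p.1.1) 𝔴 = 𝔵 ∧ map (fun p => p.1.2) 𝔴 = 𝔶
  /-- (BC): every naturality square of `m` is a weak pullback. -/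
  m_bc : ∀ {X Y : Type u} (f : X → Y) (𝔜 : T (T Y)) (𝔵 : T X),
    m 𝔜 = map f 𝔵 → ∃ 𝔛 : T (T X), map (map f) 𝔛 = 𝔜 ∧ m 𝔛 = 𝔵
  xi : T V → V
  xi_e : ∀ v : V, xi (e v) = v
  xi_m : ∀ 𝔙 : T (T V), xi (m 𝔙) = xi (map xi 𝔙)
  /-- `k : 1 → V` is a `𝕋`-algebra homomorphism. -/
  xi_unit : ∀ {X : Type u} (𝔵 : T X), xi (map (fun _ => unit) 𝔵) = unit
  /-- `⊗ : V × V → V` is a `𝕋`-algebra homomorphism. -/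
  xi_tens : ∀ 𝔴 : T (V × V),
    xi (map (fun p => tens p.1 p.2) 𝔴) = tens (xi (map Prod.fst 𝔴)) (xi (map Prod.snd 𝔴))
  /-- each component `ξ_X : V^X → V^{T X}` is monotone. -/
  xi_mono : ∀ {X : Type u} (φ φ' : X → V), (∀ x, φ x ≤ φ' x) →
    ∀ 𝔵 : T X, xi (map φ 𝔵) ≤ xi (map φ' 𝔵)
  /-- `ξ_X` is a natural transformation `P_V → P_V T`. -/
  xi_nat : ∀ {X Y : Type u} (f : X → Y) (φ : X → V) (𝔶 : T Y),
    (⨆ 𝔵 : {𝔵 : T X // map f 𝔵 = 𝔶}, xi (map φ 𝔵.1)) =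
      xi (map (fun y => ⨆ x : {x : X // f x = y}, φ x.1) 𝔶)

namespace TopTheory

variable {V : Type u} [CompleteLattice V] {T : Type u → Type u}

/-- The internal hom of the quantale: `u ⊗ (-) ⊣ hom (u, -)`. -/
def ihom (𝒯 : TopTheory V T) (u w : V) : V := sSup {z | 𝒯.tens u z ≤ w}

/-- The extension `T_ξ` of `T : Set → Set` to `V`-relations. -/
def Txi (𝒯 : TopTheory V T) {X Y : Type u} (r : X → Y → V) (𝔵 : T X) (𝔶 : T Y) : V :=
  ⨆ 𝔴 : {w : T (X × Y) // 𝒯.map Prod.fst w = 𝔵 ∧ 𝒯.map Prod.snd w = 𝔶},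
    𝒯.xi (𝒯.map (fun p => r p.1 p.2) 𝔴.1)

/-- Kleisli convolution `β ∘ α = β · T_ξ α · m_X°` of `𝒯`-relations
`α : X ⇸ Y` and `β : Y ⇸ Z`. -/
def kleisli (𝒯 : TopTheory V T) {X Y Z : Type u}
    (β : T Y → Z → V) (α : T X → Y → V) (𝔵 : T X) (z : Z) : V :=
  ⨆ 𝔛 : {𝔛 : T (T X) // 𝒯.m 𝔛 = 𝔵}, ⨆ 𝔶 : T Y, 𝒯.tens (𝒯.Txi α 𝔛.1 𝔶) (β 𝔶 z)

/-- The `𝒯`-relation `e_X° : X ⇸ X`. -/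
def unitRel (𝒯 : TopTheory V T) (X : Type u) (𝔵 : T X) (x : X) : V :=
  ⨆ _ : 𝔵 = 𝒯.e x, 𝒯.unit

/-- A `𝒯`-category structure on `X`: a `𝒯`-relation `a : X ⇸ X` with
`e_X° ≤ a` and `a ∘ a ≤ a`. -/
structure TCatStr (𝒯 : TopTheory V T) (X : Type u) where
  rel : T X → X → V
  le_refl : ∀ x : X, 𝒯.unit ≤ rel (𝒯.e x) x
  comp : ∀ (𝔵 : T X) (x : X), 𝒯.kleisli rel rel 𝔵 x ≤ rel 𝔵 x

/-- The `𝒯`-module conditions `φ ∘ a ≤ φ` and `b ∘ φ ≤ φ` for a `𝒯`-relation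
`φ : X ⇸ Y` between (structures underlying) `𝒯`-categories `(X,a)` and `(Y,b)`. -/
def IsTModRel (𝒯 : TopTheory V T) {X Y : Type u}
    (a : T X → X → V) (b : T Y → Y → V) (φ : T X → Y → V) : Prop :=
  (∀ 𝔵 y, 𝒯.kleisli φ a 𝔵 y ≤ φ 𝔵 y) ∧ (∀ 𝔵 y, 𝒯.kleisli b φ 𝔵 y ≤ φ 𝔵 y)

variable {𝒯 : TopTheory V T}

/-- `f_* = b · T f`. -/
def modStar {X Y : Type u} (b : 𝒯.TCatStr Y) (f : X → Y) (𝔵 : T X) (y : Y) : V :=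
  b.rel (𝒯.map f 𝔵) y

/-- `f^* = f° · b`. -/
def modCostar {X Y : Type u} (b : 𝒯.TCatStr Y) (f : X → Y) (𝔶 : T Y) (x : X) : V :=
  b.rel 𝔶 (f x)

/-- The extension `φ ⟜ ψ` of `φ : X ⇸∘ Y` along `ψ : X ⇸∘ Z`, given by
`(φ ⟜ ψ)(𝔷,y) = ⋀_{𝔵 ∈ T X} hom((T_ξ ψ · m_X°)(𝔵,𝔷), φ(𝔵,y))`. -/
def extend (𝒯 : TopTheory V T) {X Y Z : Type u}
    (φ : T X → Y → V) (ψ : T X → Z → V) (𝔷 : T Z) (y : Y) : V :=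
  ⨅ 𝔵 : T X, 𝒯.ihom (⨆ 𝔛 : {𝔛 : T (T X) // 𝒯.m 𝔛 = 𝔵}, 𝒯.Txi ψ 𝔛.1 𝔷) (φ 𝔵 y)

/-- A `𝒯`-functor `f : (X,a) → (Y,b)`. -/
def IsTFunctor {X Y : Type u} (a : 𝒯.TCatStr X) (b : 𝒯.TCatStr Y) (f : X → Y) : Prop :=
  ∀ (𝔵 : T X) (x : X), a.rel 𝔵 x ≤ b.rel (𝒯.map f 𝔵) (f x)

/-- A fully faithful `𝒯`-functor. -/
def FullyFaithful {X Y : Type u} (a : 𝒯.TCatStr X) (b : 𝒯.TCatStr Y) (f : X → Y) : Prop :=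
  ∀ (𝔵 : T X) (x : X), a.rel 𝔵 x = b.rel (𝒯.map f 𝔵) (f x)

/-- The order `f ≤ g ⟺ f^* ≤ g^*` on `𝒯`-functors `X → (Y,b)`. -/
def funLE {X Y : Type u} (b : 𝒯.TCatStr Y) (f g : X → Y) : Prop :=
  ∀ (𝔶 : T Y) (x : X), b.rel 𝔶 (f x) ≤ b.rel 𝔶 (g x)

/-- Equivalence `f ≅ g ⟺ f^* = g^*` of `𝒯`-functors `X → (Y,b)`. -/
def FunEquiv {X Y : Type u} (b : 𝒯.TCatStr Y) (f g : X → Y) : Prop :=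
  ∀ (𝔶 : T Y) (x : X), b.rel 𝔶 (f x) = b.rel 𝔶 (g x)

/-- `f ⊣ g`:  `1_X ≤ g·f` and `f·g ≤ 1_Y`. -/
def IsAdjunction {X Y : Type u} (a : 𝒯.TCatStr X) (b : 𝒯.TCatStr Y)
    (f : X → Y) (g : Y → X) : Prop :=
  (∀ (𝔵 : T X) (x : X), a.rel 𝔵 x ≤ a.rel 𝔵 (g (f x))) ∧
    (∀ (𝔶 : T Y) (y : Y), b.rel 𝔶 (f (g y)) ≤ b.rel 𝔶 y)

/-- A left adjoint `𝒯`-functor. -/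
def IsLeftAdjoint {X Y : Type u} (a : 𝒯.TCatStr X) (b : 𝒯.TCatStr Y) (f : X → Y) : Prop :=
  IsTFunctor a b f ∧ ∃ g : Y → X, IsTFunctor b a g ∧ IsAdjunction a b f g

/-- L-separatedness: equivalent `𝒯`-functors into `X` are equal. -/
def Separated {X : Type u} (a : 𝒯.TCatStr X) : Prop :=
  ∀ (A : Type u) (as : 𝒯.TCatStr A) (f g : A → X),
    IsTFunctor as a f → IsTFunctor as a g → FunEquiv a f g → f = g

/-- Injectivity with respect to fully faithful `𝒯`-functors. -/
def Injective {X : Type u} (a : 𝒯.TCatStr X) : Prop :=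
  ∀ (A B : Type u) (as : 𝒯.TCatStr A) (bs : 𝒯.TCatStr B) (f : A → X) (i : A → B),
    IsTFunctor as a f → IsTFunctor as bs i → FullyFaithful as bs i →
      ∃ g : B → X, IsTFunctor bs a g ∧ FunEquiv a (g ∘ i) f

/-- `g : Z → X` is the `ψ`-weighted colimit of `h : A → X`, i.e. `g_* = h_* ⟜ ψ`. -/
def IsColimit {X A Z : Type u} (a : 𝒯.TCatStr X) (h : A → X) (ψ : T A → Z → V)
    (g : Z → X) : Prop :=
  ∀ (𝔷 : T Z) (x : X), modStar a g 𝔷 x = 𝒯.extend (modStar a h) ψ 𝔷 x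

/-- Cocompleteness: every weighted diagram has a colimit. -/
def Cocomplete {X : Type u} (a : 𝒯.TCatStr X) : Prop :=
  ∀ (A Z : Type u) (as : 𝒯.TCatStr A) (cs : 𝒯.TCatStr Z) (h : A → X),
    IsTFunctor as a h → ∀ ψ : T A → Z → V, 𝒯.IsTModRel as.rel cs.rel ψ →
      ∃ g : Z → X, IsTFunctor cs a g ∧ IsColimit a h ψ g

/-- Cocontinuity: preservation of all weighted colimits. -/
def Cocontinuous {X Y : Type u} (a : 𝒯.TCatStr X) (b : 𝒯.TCatStr Y) (f : X → Y) : Prop :=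
  ∀ (A Z : Type u) (as : 𝒯.TCatStr A) (cs : 𝒯.TCatStr Z) (h : A → X)
    (ψ : T A → Z → V) (g : Z → X),
    IsTFunctor as a h → 𝒯.IsTModRel as.rel cs.rel ψ → IsTFunctor cs a g →
      IsColimit a h ψ g → IsColimit b (f ∘ h) ψ (f ∘ g)

/-- A presheaf on `(X,a)`: a `𝒯`-module `X ⇸∘ G`, where `G = (1, e_1°)`. -/
def IsPresheaf {X : Type u} (a : 𝒯.TCatStr X) (ψ : T X → V) : Prop :=
  𝒯.IsTModRel a.rel (𝒯.unitRel PUnit) (fun 𝔵 _ => ψ 𝔵)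

/-- The underlying set of the presheaf `𝒯`-category `X̂`. -/
def Hat {X : Type u} (a : 𝒯.TCatStr X) : Type u := {ψ : T X → V // IsPresheaf a ψ}

/-- The `𝒯`-category structure `⟦-,-⟧` of `V^{|X|}`. -/
def powRel (𝒯 : TopTheory V T) (X : Type u) (𝔭 : T (T X → V)) (ψ : T X → V) : V :=
  ⨅ 𝔮 : {q : T ((T X) × (T X → V)) // 𝒯.map Prod.snd q = 𝔭},
    𝒯.ihom (𝒯.xi (𝒯.map (fun p => p.2 p.1) 𝔮.1)) (ψ (𝒯.m (𝒯.map Prod.fst 𝔮.1)))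

/-- `hs` is the `𝒯`-category structure on `X̂` inherited from `V^{|X|}`. -/
def IsHatStr {X : Type u} (a : 𝒯.TCatStr X) (hs : 𝒯.TCatStr (Hat a)) : Prop :=
  ∀ (𝔭 : T (Hat a)) (ψ : Hat a), hs.rel 𝔭 ψ = 𝒯.powRel X (𝒯.map Subtype.val 𝔭) ψ.1

/-- `y` is the Yoneda functor `X → X̂`, `y x = a(-,x)`. -/
def IsYoneda {X : Type u} (a : 𝒯.TCatStr X) (y : X → Hat a) : Prop :=
  ∀ (x : X) (𝔵 : T X), (y x).1 𝔵 = a.rel 𝔵 x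

/-- The underlying map `ψ ↦ ψ ∘ f^*` of `f̂ : X̂ → Ŷ`. -/
def hatMapRel {X Y : Type u} (b : 𝒯.TCatStr Y) (f : X → Y) (ψ : T X → V) (𝔶 : T Y) : V :=
  𝒯.kleisli (fun 𝔵 (_ : PUnit.{u + 1}) => ψ 𝔵) (modCostar b f) 𝔶 PUnit.unit

/-- `fh` is the `𝒯`-functor `f̂ : X̂ → Ŷ`, with underlying map `ψ ↦ ψ ∘ f^*`. -/
def IsHatMap {X Y : Type u} (a : 𝒯.TCatStr X) (b : 𝒯.TCatStr Y) (f : X → Y)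
    (fh : Hat a → Hat b) : Prop :=
  ∀ (ψ : Hat a) (𝔶 : T Y), (fh ψ).1 𝔶 = hatMapRel b f ψ.1 𝔶

/-- An inhabited `𝒯`-module: `k ≤ ⋀_y ⋁_𝔵 φ(𝔵,y)`. -/
def InhabitedMod (𝒯 : TopTheory V T) {X Y : Type u} (φ : T X → Y → V) : Prop :=
  𝒯.unit ≤ ⨅ y : Y, ⨆ 𝔵 : T X, φ 𝔵 y

/-- A dense `𝒯`-functor: `f_*` is inhabited. -/
def Dense {X Y : Type u} (b : 𝒯.TCatStr Y) (f : X → Y) : Prop :=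
  𝒯.InhabitedMod (modStar b f)

/-- The underlying set of `X⁺ = {ψ ∈ X̂ ∣ ψ inhabited}`. -/
def Plus {X : Type u} (a : 𝒯.TCatStr X) : Type u :=
  {ψ : Hat a // 𝒯.InhabitedMod (fun 𝔵 (_ : PUnit.{u + 1}) => ψ.1 𝔵)}

/-- `ps` is the `𝒯`-category structure on `X⁺` inherited from `X̂`. -/
def IsPlusStr {X : Type u} (a : 𝒯.TCatStr X) (hs : 𝒯.TCatStr (Hat a))
    (ps : 𝒯.TCatStr (Plus a)) : Prop :=
  ∀ (𝔭 : T (Plus a)) (ψ : Plus a), ps.rel 𝔭 ψ = hs.rel (𝒯.map Subtype.val 𝔭) ψ.1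

/-- Inhabited-cocompleteness: all colimits with inhabited weights exist. -/
def ICocomplete {X : Type u} (a : 𝒯.TCatStr X) : Prop :=
  ∀ (A Z : Type u) (as : 𝒯.TCatStr A) (cs : 𝒯.TCatStr Z) (h : A → X),
    IsTFunctor as a h → ∀ ψ : T A → Z → V, 𝒯.IsTModRel as.rel cs.rel ψ →
      𝒯.InhabitedMod ψ → ∃ g : Z → X, IsTFunctor cs a g ∧ IsColimit a h ψ g

/-- Inhabited-cocontinuity: preservation of all colimits with inhabited weights. -/
def ICocontinuous {X Y : Type u} (a : 𝒯.TCatStr X) (b : 𝒯.TCatStr Y) (f : X → Y) : Prop :=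
  ∀ (A Z : Type u) (as : 𝒯.TCatStr A) (cs : 𝒯.TCatStr Z) (h : A → X)
    (ψ : T A → Z → V) (g : Z → X),
    IsTFunctor as a h → 𝒯.IsTModRel as.rel cs.rel ψ → 𝒯.InhabitedMod ψ →
      IsTFunctor cs a g → IsColimit a h ψ g → IsColimit b (f ∘ h) ψ (f ∘ g)


section Helpers

variable {V : Type u} [CompleteLattice V] {T : Type u → Type u} {𝒯 : TopTheory V T}

/-! ### Quantale lemmas -/

lemma tens_iSup {ι : Sort*} (u : V) (f : ι → V) :
    𝒯.tens u (⨆ i, f i) = ⨆ i, 𝒯.tens u (f i) := by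
  rw [show (⨆ i, f i) = sSup (Set.range f) from rfl, 𝒯.tens_sSup]
  rw [iSup_range]

lemma tens_mono_right {u v v' : V} (h : v ≤ v') : 𝒯.tens u v ≤ 𝒯.tens u v' := by
  have : 𝒯.tens u (v ⊔ v') = 𝒯.tens u v ⊔ 𝒯.tens u v' := by
    rw [show v ⊔ v' = ⨆ b : Bool, (if b then v else v' : V) from by
      simp [iSup_bool_eq, sup_comm], tens_iSup]
    simp [iSup_bool_eq]
  have h2 : v ⊔ v' = v' := sup_eq_right.2 h
  rw [h2] at this
  rw [this]; exact le_sup_left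

lemma tens_mono_left {u u' v : V} (h : u ≤ u') : 𝒯.tens u v ≤ 𝒯.tens u' v := by
  rw [𝒯.tens_comm u v, 𝒯.tens_comm u' v]; exact tens_mono_right h

lemma tens_mono {u u' v v' : V} (h : u ≤ u') (h' : v ≤ v') :
    𝒯.tens u v ≤ 𝒯.tens u' v' := le_trans (tens_mono_left h) (tens_mono_right h')

lemma tens_bot (u : V) : 𝒯.tens u ⊥ = ⊥ := by
  have := 𝒯.tens_sSup u ∅; simpa using this

lemma tens_unit_right (v : V) : 𝒯.tens v 𝒯.unit = v := by
  rw [𝒯.tens_comm, 𝒯.unit_tens]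

lemma le_ihom {u z w : V} (h : 𝒯.tens u z ≤ w) : z ≤ 𝒯.ihom u w := le_sSup h

lemma tens_ihom_le (u w : V) : 𝒯.tens u (𝒯.ihom u w) ≤ w := by
  rw [TopTheory.ihom, 𝒯.tens_sSup]
  exact iSup₂_le fun v hv => hv

lemma tens_le_of_le_ihom {u u' v w : V} (h : u ≤ u') (h' : v ≤ 𝒯.ihom u' w) :
    𝒯.tens u v ≤ w := le_trans (tens_mono h h') (tens_ihom_le u' w)

lemma ihom_mono_right {u w w' : V} (h : w ≤ w') : 𝒯.ihom u w ≤ 𝒯.ihom u w' :=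
  sSup_le_sSup fun z hz => le_trans hz h

lemma ihom_le_of_unit_le {u w : V} (h : 𝒯.unit ≤ u) : 𝒯.ihom u w ≤ w := by
  refine sSup_le fun z hz => ?_
  calc z = 𝒯.tens 𝒯.unit z := (𝒯.unit_tens z).symm
  _ ≤ 𝒯.tens u z := tens_mono_left h
  _ ≤ w := hz

/-! ### Monad lemmas -/

lemma map_map {X Y Z : Type u} (g : Y → Z) (f : X → Y) (𝔵 : T X) :
    𝒯.map g (𝒯.map f 𝔵) = 𝒯.map (fun x => g (f x)) 𝔵 := (𝒯.map_comp g f 𝔵).symm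

lemma map_congr {X Y : Type u} {f g : X → Y} (h : ∀ x, f x = g x) (𝔵 : T X) :
    𝒯.map f 𝔵 = 𝒯.map g 𝔵 := by rw [show f = g from funext h]

/-! ### ξ lemmas -/

lemma unit_le_xi_map {W : Type u} {φ : W → V} (h : ∀ w, 𝒯.unit ≤ φ w) (𝔱 : T W) :
    𝒯.unit ≤ 𝒯.xi (𝒯.map φ 𝔱) := by
  rw [← 𝒯.xi_unit 𝔱]; exact 𝒯.xi_mono _ _ h 𝔱

lemma xi_map_tens {W : Type u} (u v : W → V) (𝔱 : T W) :
    𝒯.xi (𝒯.map (fun w => 𝒯.tens (u w) (v w)) 𝔱) =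
      𝒯.tens (𝒯.xi (𝒯.map u 𝔱)) (𝒯.xi (𝒯.map v 𝔱)) := by
  have h := 𝒯.xi_tens (𝒯.map (fun w => (u w, v w)) 𝔱)
  rw [map_map, map_map, map_map] at h
  exact h

lemma xi_map_xi_map {W : Type u} (φ : W → V) (𝔡 : T (T W)) :
    𝒯.xi (𝒯.map (fun u => 𝒯.xi (𝒯.map φ u)) 𝔡) = 𝒯.xi (𝒯.map φ (𝒯.m 𝔡)) := by
  rw [show (fun u => 𝒯.xi (𝒯.map φ u)) = (𝒯.xi ∘ 𝒯.map φ) from rfl, 𝒯.map_comp,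
    ← 𝒯.xi_m, ← 𝒯.m_nat]

/-! ### Txi lemmas -/

lemma le_Txi {X Y : Type u} (r : X → Y → V) (𝔱 : T (X × Y)) :
    𝒯.xi (𝒯.map (fun p => r p.1 p.2) 𝔱) ≤
      𝒯.Txi r (𝒯.map Prod.fst 𝔱) (𝒯.map Prod.snd 𝔱) :=
  le_iSup (fun 𝔴 : {w : T (X × Y) // 𝒯.map Prod.fst w = 𝒯.map Prod.fst 𝔱 ∧
    𝒯.map Prod.snd w = 𝒯.map Prod.snd 𝔱} => 𝒯.xi (𝒯.map (fun p => r p.1 p.2) 𝔴.1))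
    ⟨𝔱, rfl, rfl⟩

lemma xi_map_le_Txi {W X Y : Type u} (r : X → Y → V) (u : W → X) (v : W → Y) (𝔱 : T W) :
    𝒯.xi (𝒯.map (fun w => r (u w) (v w)) 𝔱) ≤ 𝒯.Txi r (𝒯.map u 𝔱) (𝒯.map v 𝔱) := by
  have h := le_Txi (𝒯 := 𝒯) r (𝒯.map (fun w => (u w, v w)) 𝔱)
  rw [map_map, map_map, map_map] at h
  exact h

/-! ### Category lemmas -/

lemma comp_le {X : Type u} (a : 𝒯.TCatStr X) (𝔛 : T (T X)) (𝔶 : T X) (z : X) :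
    𝒯.tens (𝒯.Txi a.rel 𝔛 𝔶) (a.rel 𝔶 z) ≤ a.rel (𝒯.m 𝔛) z := by
  refine le_trans ?_ (a.comp (𝒯.m 𝔛) z)
  refine le_trans (le_iSup (fun 𝔶' : T X => 𝒯.tens (𝒯.Txi a.rel 𝔛 𝔶') (a.rel 𝔶' z)) 𝔶) ?_
  exact le_iSup (fun 𝔛' : {𝔛' : T (T X) // 𝒯.m 𝔛' = 𝒯.m 𝔛} => ⨆ 𝔶' : T X,
      𝒯.tens (𝒯.Txi a.rel 𝔛'.1 𝔶') (a.rel 𝔶' z)) ⟨𝔛, rfl⟩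

/-- If `1 ≤ f` pointwise then `a·Tf ≤ a`. -/
lemma rel_map_le {X : Type u} (a : 𝒯.TCatStr X) {f : X → X}
    (hf : ∀ x, 𝒯.unit ≤ a.rel (𝒯.e x) (f x)) (𝔵 : T X) (z : X) :
    a.rel (𝒯.map f 𝔵) z ≤ a.rel 𝔵 z := by
  have h1 : 𝒯.unit ≤ 𝒯.Txi a.rel (𝒯.map 𝒯.e 𝔵) (𝒯.map f 𝔵) :=
    le_trans (unit_le_xi_map hf 𝔵) (xi_map_le_Txi a.rel 𝒯.e f 𝔵)
  calc a.rel (𝒯.map f 𝔵) z = 𝒯.tens 𝒯.unit (a.rel (𝒯.map f 𝔵) z) := (𝒯.unit_tens _).symm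
  _ ≤ 𝒯.tens (𝒯.Txi a.rel (𝒯.map 𝒯.e 𝔵) (𝒯.map f 𝔵)) (a.rel (𝒯.map f 𝔵) z) :=
      tens_mono_left h1
  _ ≤ a.rel (𝒯.m (𝒯.map 𝒯.e 𝔵)) z := comp_le a _ _ z
  _ = a.rel 𝔵 z := by rw [𝒯.m_map_e]

/-- If `unit ≤ a(e u, u')` then `a(𝔶,u) ≤ a(𝔶,u')`. -/
lemma rel_le_rel {X : Type u} (a : 𝒯.TCatStr X) {u u' : X}
    (h : 𝒯.unit ≤ a.rel (𝒯.e u) u') (𝔶 : T X) : a.rel 𝔶 u ≤ a.rel 𝔶 u' := by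
  have h1 : a.rel 𝔶 u ≤ 𝒯.Txi a.rel (𝒯.e 𝔶) (𝒯.e u) := by
    have h2 := le_Txi (𝒯 := 𝒯) a.rel (𝒯.e (𝔶, u))
    rw [𝒯.e_nat, 𝒯.e_nat, 𝒯.e_nat, 𝒯.xi_e] at h2
    exact h2
  calc a.rel 𝔶 u = 𝒯.tens (a.rel 𝔶 u) 𝒯.unit := (tens_unit_right _).symm
  _ ≤ 𝒯.tens (𝒯.Txi a.rel (𝒯.e 𝔶) (𝒯.e u)) (a.rel (𝒯.e u) u') := tens_mono h1 h
  _ ≤ a.rel (𝒯.m (𝒯.e 𝔶)) u' := comp_le a _ _ u'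
  _ = a.rel 𝔶 u' := by rw [𝒯.m_e]

end Helpers

section Kleisli
variable {V : Type u} [CompleteLattice V] {T : Type u → Type u} {𝒯 : TopTheory V T}

lemma tens_iSup_left {ι : Sort*} (f : ι → V) (v : V) :
    𝒯.tens (⨆ i, f i) v = ⨆ i, 𝒯.tens (f i) v := by
  rw [𝒯.tens_comm, tens_iSup]
  exact iSup_congr fun i => 𝒯.tens_comm v (f i)

lemma le_kleisli {X Y Z : Type u} (β : T Y → Z → V) (α : T X → Y → V)
    (𝔛 : T (T X)) (𝔶 : T Y) (z : Z) :
    𝒯.tens (𝒯.Txi α 𝔛 𝔶) (β 𝔶 z) ≤ 𝒯.kleisli β α (𝒯.m 𝔛) z := by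
  refine le_trans (le_iSup (fun 𝔶' : T Y => 𝒯.tens (𝒯.Txi α 𝔛 𝔶') (β 𝔶' z)) 𝔶) ?_
  exact le_iSup (fun 𝔛' : {𝔛' : T (T X) // 𝒯.m 𝔛' = 𝒯.m 𝔛} => ⨆ 𝔶' : T Y,
      𝒯.tens (𝒯.Txi α 𝔛'.1 𝔶') (β 𝔶' z)) ⟨𝔛, rfl⟩

end Kleisli

section MapMap
variable {V : Type u} [CompleteLattice V] {T : Type u → Type u} {𝒯 : TopTheory V T}

lemma map_map' {X Y Z : Type u} {g : Y → Z} {f : X → Y} {k : X → Z}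
    (hfg : ∀ x, g (f x) = k x) (𝔵 : T X) : 𝒯.map g (𝒯.map f 𝔵) = 𝒯.map k 𝔵 := by
  rw [map_map]; exact map_congr hfg 𝔵

end MapMap


section HatLemmas

variable {V : Type u} [CompleteLattice V] {T : Type u → Type u} {𝒯 : TopTheory V T}
variable {X : Type u} {a : 𝒯.TCatStr X} {hs : 𝒯.TCatStr (Hat a)}

/-- Pointwise monotonicity of the presheaf-category structure. -/
lemma hs_mono (hhs : IsHatStr a hs) {ψ χ : Hat a} (h : ∀ 𝔵, ψ.1 𝔵 ≤ χ.1 𝔵)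
    (𝔭 : T (Hat a)) : hs.rel 𝔭 ψ ≤ hs.rel 𝔭 χ := by
  rw [hhs, hhs]
  exact iInf_mono fun q => ihom_mono_right (h _)

/-- The Yoneda lemma. -/
lemma yoneda (hhs : IsHatStr a hs) {y : X → Hat a} (hy : IsYoneda a y)
    (𝔵 : T X) (ψ : Hat a) : hs.rel (𝒯.map y 𝔵) ψ = ψ.1 𝔵 := by
  have hyv : 𝒯.map Subtype.val (𝒯.map y 𝔵) = 𝒯.map (fun x => (y x).1) 𝔵 := map_map _ _ _
  rw [hhs]; erw [hyv]
  apply le_antisymm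
  · -- pick the tautological witness
    have hq : 𝒯.map Prod.snd (𝒯.map (fun x => ((𝒯.e x : T X), (y x).1)) 𝔵) =
        𝒯.map (fun x => (y x).1) 𝔵 := by rw [map_map]
    refine le_trans (iInf_le _ ⟨𝒯.map (fun x => ((𝒯.e x : T X), (y x).1)) 𝔵, hq⟩) ?_
    have h1 : 𝒯.map (fun p : T X × (T X → V) => p.2 p.1)
        (𝒯.map (fun x => ((𝒯.e x : T X), (y x).1)) 𝔵) =
        𝒯.map (fun x => a.rel (𝒯.e x) x) 𝔵 := by
      rw [map_map]; exact map_congr (fun x => hy x (𝒯.e x)) 𝔵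
    have h2 : 𝒯.m (𝒯.map Prod.fst (𝒯.map (fun x => ((𝒯.e x : T X), (y x).1)) 𝔵)) = 𝔵 := by
      rw [map_map]; exact 𝒯.m_map_e 𝔵
    rw [h1, h2]
    exact ihom_le_of_unit_le (unit_le_xi_map (fun x => a.le_refl x) 𝔵)
  · refine le_iInf fun q => le_ihom ?_
    obtain ⟨𝔴, h1, h2⟩ := 𝒯.map_bc Prod.snd (fun x => (y x).1) q.1 𝔵 q.2
    have hev : 𝒯.map (fun p : T X × (T X → V) => p.2 p.1) q.1 =
        𝒯.map (fun w : {p : (T X × (T X → V)) × X // p.1.2 = (y p.2).1} =>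
          a.rel w.1.1.1 w.1.2) 𝔴 := by
      rw [← h1, map_map]
      exact map_congr (fun w => by rw [w.2]; exact hy w.1.2 w.1.1.1) 𝔴
    have hfst : 𝒯.map Prod.fst q.1 =
        𝒯.map (fun w : {p : (T X × (T X → V)) × X // p.1.2 = (y p.2).1} => w.1.1.1) 𝔴 := by
      rw [← h1, map_map]
    have hTxi : 𝒯.xi (𝒯.map (fun p : T X × (T X → V) => p.2 p.1) q.1) ≤
        𝒯.Txi a.rel (𝒯.map Prod.fst q.1) 𝔵 := by
      rw [hev, hfst, ← h2]
      exact xi_map_le_Txi a.rel _ _ 𝔴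
    refine le_trans (tens_mono_left hTxi) ?_
    -- use the module property of ψ
    have hmod := ψ.2.1 (𝒯.m (𝒯.map Prod.fst q.1)) PUnit.unit
    refine le_trans ?_ hmod
    refine le_trans ?_ (le_iSup _ (⟨𝒯.map Prod.fst q.1, rfl⟩ :
      {𝔛 : T (T X) // 𝒯.m 𝔛 = 𝒯.m (𝒯.map Prod.fst q.1)}))
    exact le_iSup (fun 𝔶 : T X => 𝒯.tens (𝒯.Txi a.rel (𝒯.map Prod.fst q.1) 𝔶) (ψ.1 𝔶)) 𝔵

/-- Yoneda is fully faithful. -/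
lemma yoneda_ff (hhs : IsHatStr a hs) {y : X → Hat a} (hy : IsYoneda a y) :
    FullyFaithful a hs y := fun 𝔵 x => by rw [yoneda hhs hy, hy]

/-- If `S ⊣ y` then `S_* = (y)^*`, i.e. `a(TS 𝔭, x) = X̂(𝔭, y x)`. -/
lemma adj_star (hhs : IsHatStr a hs) {y : X → Hat a} (hy : IsYoneda a y)
    {S : Hat a → X} (hS : IsTFunctor hs a S) (hadj : IsAdjunction hs a S y)
    (𝔭 : T (Hat a)) (x : X) : a.rel (𝒯.map S 𝔭) x = hs.rel 𝔭 (y x) := by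
  apply le_antisymm
  · have h1 : a.rel (𝒯.map S 𝔭) x = hs.rel (𝒯.map y (𝒯.map S 𝔭)) (y x) := by
      rw [yoneda hhs hy, hy]
    rw [h1, map_map]
    exact rel_map_le hs (f := fun ψ => y (S ψ))
      (fun ψ => le_trans (hs.le_refl ψ) (hadj.1 (𝒯.e ψ) ψ)) 𝔭 (y x)
  · exact le_trans (hS 𝔭 (y x)) (hadj.2 (𝒯.map S 𝔭) x)

end HatLemmas


section Colim

variable {V : Type u} [CompleteLattice V] {T : Type u → Type u}
variable (𝒯 : TopTheory V T) {X A Z : Type u} (a : 𝒯.TCatStr X) (h : A → X)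
  (ψ : T A → Z → V)

/-- The presheaf `(ĥ ∘ ψ̃)(z) = ψ(-,z) ∘ h^*`, in flattened form. -/
def colimP (z : Z) (𝔵 : T X) : V :=
  ⨆ w : {w : T (T X × A) // 𝒯.m (𝒯.map Prod.fst w) = 𝔵},
    𝒯.tens (𝒯.xi (𝒯.map (fun p : T X × A => a.rel p.1 (h p.2)) w.1))
      (ψ (𝒯.map Prod.snd w.1) z)

variable {𝒯 a h ψ}

lemma le_colimP {z : Z} {𝔵 : T X} (w : T (T X × A)) (hw : 𝒯.m (𝒯.map Prod.fst w) = 𝔵) :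
    𝒯.tens (𝒯.xi (𝒯.map (fun p : T X × A => a.rel p.1 (h p.2)) w))
      (ψ (𝒯.map Prod.snd w) z) ≤ colimP 𝒯 a h ψ z 𝔵 :=
  le_iSup (fun w : {w : T (T X × A) // 𝒯.m (𝒯.map Prod.fst w) = 𝔵} =>
    𝒯.tens (𝒯.xi (𝒯.map (fun p : T X × A => a.rel p.1 (h p.2)) w.1))
      (ψ (𝒯.map Prod.snd w.1) z)) ⟨w, hw⟩

/-- `ψ(𝔞,z) ≤ colimP z (Th 𝔞)`. -/
lemma weight_le_colimP (𝔞 : T A) (z : Z) :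
    ψ 𝔞 z ≤ colimP 𝒯 a h ψ z (𝒯.map h 𝔞) := by
  set w : T (T X × A) := 𝒯.map (fun a' => ((𝒯.e (h a') : T X), a')) 𝔞 with hwdef
  have hfst : 𝒯.map Prod.fst w = 𝒯.map 𝒯.e (𝒯.map h 𝔞) := by
    rw [hwdef, map_map, map_map]
  have hw : 𝒯.m (𝒯.map Prod.fst w) = 𝒯.map h 𝔞 := by rw [hfst, 𝒯.m_map_e]
  have hsnd : 𝒯.map Prod.snd w = 𝔞 := by
    rw [hwdef, map_map]
    rw [show (fun x : A => Prod.snd ((𝒯.e (h x) : T X), x)) = id from rfl, 𝒯.map_id]; rfl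
  have hval : 𝒯.map (fun p : T X × A => a.rel p.1 (h p.2)) w =
      𝒯.map (fun a' => a.rel (𝒯.e (h a')) (h a')) 𝔞 := by rw [hwdef, map_map]
  refine le_trans ?_ (le_colimP w hw)
  rw [hsnd, hval]
  calc ψ 𝔞 z = 𝒯.tens 𝒯.unit (ψ 𝔞 z) := (𝒯.unit_tens _).symm
  _ ≤ _ := tens_mono_left (unit_le_xi_map (fun a' => a.le_refl (h a')) 𝔞)

/-- Σ-condition for a module `ψ` (needs the `T! 𝔢 = e ⋆` constraint). -/
lemma mod_sigma {cs : 𝒯.TCatStr Z}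
    (hψ2 : ∀ (𝔞 : T A) (z : Z), 𝒯.kleisli cs.rel ψ 𝔞 z ≤ ψ 𝔞 z)
    (z : Z) (𝔢 : T (T A)) (hc : 𝒯.map (fun _ => PUnit.unit.{u + 1}) 𝔢 = 𝒯.e PUnit.unit) :
    𝒯.xi (𝒯.map (fun 𝔞 => ψ 𝔞 z) 𝔢) ≤ ψ (𝒯.m 𝔢) z := by
  have hz : 𝒯.map (fun _ => z) 𝔢 = 𝒯.e z := by
    have : 𝒯.map (fun _ : T A => z) 𝔢 =
        𝒯.map (fun _ : PUnit.{u + 1} => z) (𝒯.map (fun _ => PUnit.unit) 𝔢) := by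
      rw [map_map]
    rw [this, hc, 𝒯.e_nat]
  have h1 : 𝒯.xi (𝒯.map (fun 𝔞 => ψ 𝔞 z) 𝔢) ≤ 𝒯.Txi ψ 𝔢 (𝒯.e z) := by
    have := xi_map_le_Txi (𝒯 := 𝒯) ψ (fun 𝔞 : T A => 𝔞) (fun _ => z) 𝔢
    rw [hz, show (fun 𝔞 : T A => 𝔞) = id from rfl, 𝒯.map_id] at this
    exact this
  calc 𝒯.xi (𝒯.map (fun 𝔞 => ψ 𝔞 z) 𝔢) = 𝒯.tens (𝒯.xi (𝒯.map (fun 𝔞 => ψ 𝔞 z) 𝔢)) 𝒯.unit :=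
        (tens_unit_right _).symm
  _ ≤ 𝒯.tens (𝒯.Txi ψ 𝔢 (𝒯.e z)) (cs.rel (𝒯.e z) z) := tens_mono h1 (cs.le_refl z)
  _ ≤ 𝒯.kleisli cs.rel ψ (𝒯.m 𝔢) z := le_kleisli _ _ _ _ _
  _ ≤ ψ (𝒯.m 𝔢) z := hψ2 _ z

end Colim


section Colim2

variable {V : Type u} [CompleteLattice V] {T : Type u → Type u}
variable {𝒯 : TopTheory V T} {X A Z : Type u} {a : 𝒯.TCatStr X} {h : A → X}
  {ψ : T A → Z → V} {cs : 𝒯.TCatStr Z}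

/-- Σ-condition for `colimP`. -/
lemma colimP_sigma (hψ2 : ∀ (𝔞 : T A) (z : Z), 𝒯.kleisli cs.rel ψ 𝔞 z ≤ ψ 𝔞 z)
    (z : Z) (𝔛 : T (T X)) (hc : 𝒯.map (fun _ => PUnit.unit.{u + 1}) 𝔛 = 𝒯.e PUnit.unit) :
    𝒯.xi (𝒯.map (colimP 𝒯 a h ψ z) 𝔛) ≤ colimP 𝒯 a h ψ z (𝒯.m 𝔛) := by
  have key : 𝒯.xi (𝒯.map (colimP 𝒯 a h ψ z) 𝔛) =
      ⨆ 𝔡 : {𝔡 : T (T (T X × A)) // 𝒯.map (fun w => 𝒯.m (𝒯.map Prod.fst w)) 𝔡 = 𝔛},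
        𝒯.xi (𝒯.map (fun w =>
          𝒯.tens (𝒯.xi (𝒯.map (fun p : T X × A => a.rel p.1 (h p.2)) w))
            (ψ (𝒯.map Prod.snd w) z)) 𝔡.1) :=
    (𝒯.xi_nat (fun w : T (T X × A) => 𝒯.m (𝒯.map Prod.fst w))
      (fun w : T (T X × A) =>
        𝒯.tens (𝒯.xi (𝒯.map (fun p : T X × A => a.rel p.1 (h p.2)) w))
          (ψ (𝒯.map Prod.snd w) z)) 𝔛).symm
  refine le_trans (le_of_eq key) (iSup_le ?_)
  rintro ⟨𝔡, h𝔡⟩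
  have ht : 𝒯.xi (𝒯.map (fun w =>
      𝒯.tens (𝒯.xi (𝒯.map (fun p : T X × A => a.rel p.1 (h p.2)) w))
        (ψ (𝒯.map Prod.snd w) z)) 𝔡) =
      𝒯.tens (𝒯.xi (𝒯.map (fun w =>
          𝒯.xi (𝒯.map (fun p : T X × A => a.rel p.1 (h p.2)) w)) 𝔡))
        (𝒯.xi (𝒯.map (fun w => ψ (𝒯.map Prod.snd w) z) 𝔡)) := xi_map_tens _ _ 𝔡
  have hxi1 : 𝒯.xi (𝒯.map (fun w =>
      𝒯.xi (𝒯.map (fun p : T X × A => a.rel p.1 (h p.2)) w)) 𝔡) =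
      𝒯.xi (𝒯.map (fun p : T X × A => a.rel p.1 (h p.2)) (𝒯.m 𝔡)) := xi_map_xi_map _ 𝔡
  have h2a : 𝒯.map (fun w => ψ (𝒯.map Prod.snd w) z) 𝔡 =
      𝒯.map (fun 𝔞 => ψ 𝔞 z) (𝒯.map (𝒯.map Prod.snd) 𝔡) := by rw [map_map]
  have hc' : 𝒯.map (fun _ => PUnit.unit.{u + 1}) (𝒯.map (𝒯.map Prod.snd) 𝔡) =
      𝒯.e PUnit.unit := by
    rw [map_map]
    have h3 : 𝒯.map (fun _ : T (T X × A) => PUnit.unit.{u + 1}) 𝔡 =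
        𝒯.map (fun _ : T X => PUnit.unit) (𝒯.map (fun w => 𝒯.m (𝒯.map Prod.fst w)) 𝔡) := by
      rw [map_map]
    rw [h3, h𝔡, hc]
  have h2 : 𝒯.xi (𝒯.map (fun w => ψ (𝒯.map Prod.snd w) z) 𝔡) ≤
      ψ (𝒯.map Prod.snd (𝒯.m 𝔡)) z := by
    rw [h2a]
    refine le_trans (mod_sigma hψ2 z (𝒯.map (𝒯.map Prod.snd) 𝔡) hc') ?_
    rw [← 𝒯.m_nat Prod.snd 𝔡]
  have hw : 𝒯.m (𝒯.map Prod.fst (𝒯.m 𝔡)) = 𝒯.m 𝔛 := by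
    rw [𝒯.m_nat Prod.fst 𝔡, 𝒯.m_assoc, map_map, ← h𝔡]
  calc _ = _ := ht
  _ ≤ 𝒯.tens (𝒯.xi (𝒯.map (fun p : T X × A => a.rel p.1 (h p.2)) (𝒯.m 𝔡)))
      (ψ (𝒯.map Prod.snd (𝒯.m 𝔡)) z) := by rw [hxi1]; exact tens_mono_right h2
  _ ≤ _ := by rw [← hw]; exact le_colimP (𝒯.m 𝔡) rfl

/-- `colimP z` absorbs `a` from the right. -/
lemma colimP_rel (z : Z) (𝔱 : T (T X × X)) (w' : T (T X × A))
    (hyw : 𝒯.m (𝒯.map Prod.fst w') = 𝒯.map Prod.snd 𝔱) :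
    𝒯.tens (𝒯.xi (𝒯.map (fun p : T X × X => a.rel p.1 p.2) 𝔱))
      (𝒯.tens (𝒯.xi (𝒯.map (fun p : T X × A => a.rel p.1 (h p.2)) w'))
        (ψ (𝒯.map Prod.snd w') z)) ≤
      colimP 𝒯 a h ψ z (𝒯.m (𝒯.map Prod.fst 𝔱)) := by
  obtain ⟨𝔛₁, hA, hB⟩ := 𝒯.m_bc Prod.snd (𝒯.map Prod.fst w') 𝔱 hyw
  obtain ⟨𝔰, hs1, hs2⟩ := 𝒯.map_bc (𝒯.map Prod.snd) Prod.fst 𝔛₁ w' (by rw [hA])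
  set w'' : T (T X × A) := 𝒯.map
    (fun s : {p : T (T X × X) × (T X × A) // 𝒯.map Prod.snd p.1 = Prod.fst p.2} =>
      ((𝒯.m (𝒯.map Prod.fst s.1.1) : T X), s.1.2.2)) 𝔰 with hwdef
  have hsnd : 𝒯.map Prod.snd w'' = 𝒯.map Prod.snd w' := by
    rw [hwdef, map_map, ← hs2, map_map]
  have hm : 𝒯.m (𝒯.map Prod.fst w'') = 𝒯.m (𝒯.map Prod.fst 𝔱) := by
    have e1 : 𝒯.map Prod.fst w'' =
        𝒯.map 𝒯.m (𝒯.map (𝒯.map Prod.fst) 𝔛₁) := by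
      rw [hwdef, map_map, ← hs1, map_map, map_map]
    rw [e1, ← 𝒯.m_assoc, ← 𝒯.m_nat, hB]
  -- pointwise inequality
  have hpt : ∀ s : {p : T (T X × X) × (T X × A) // 𝒯.map Prod.snd p.1 = Prod.fst p.2},
      𝒯.tens (𝒯.xi (𝒯.map (fun p : T X × X => a.rel p.1 p.2) s.1.1))
        (a.rel s.1.2.1 (h s.1.2.2)) ≤ a.rel (𝒯.m (𝒯.map Prod.fst s.1.1)) (h s.1.2.2) := by
    rintro ⟨⟨u, p⟩, hup⟩
    dsimp at hup ⊢
    have h1 := le_Txi (𝒯 := 𝒯) a.rel u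
    rw [hup] at h1
    exact le_trans (tens_mono_left h1) (comp_le a _ _ _)
  have hval : 𝒯.tens (𝒯.xi (𝒯.map (fun p : T X × X => a.rel p.1 p.2) 𝔱))
      (𝒯.xi (𝒯.map (fun p : T X × A => a.rel p.1 (h p.2)) w')) ≤
      𝒯.xi (𝒯.map (fun p : T X × A => a.rel p.1 (h p.2)) w'') := by
    have e2 : 𝒯.map (fun p : T X × A => a.rel p.1 (h p.2)) w'' =
        𝒯.map (fun s : {p : T (T X × X) × (T X × A) // 𝒯.map Prod.snd p.1 = Prod.fst p.2} =>
          a.rel (𝒯.m (𝒯.map Prod.fst s.1.1)) (h s.1.2.2)) 𝔰 := by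
      rw [hwdef, map_map]
    rw [e2]
    refine le_trans ?_ (𝒯.xi_mono _ _ (fun s => hpt s) 𝔰)
    have e3 : 𝒯.xi (𝒯.map (fun s :
        {p : T (T X × X) × (T X × A) // 𝒯.map Prod.snd p.1 = Prod.fst p.2} =>
        𝒯.tens (𝒯.xi (𝒯.map (fun p : T X × X => a.rel p.1 p.2) s.1.1))
          (a.rel s.1.2.1 (h s.1.2.2))) 𝔰) =
        𝒯.tens (𝒯.xi (𝒯.map (fun s :
          {p : T (T X × X) × (T X × A) // 𝒯.map Prod.snd p.1 = Prod.fst p.2} =>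
          𝒯.xi (𝒯.map (fun p : T X × X => a.rel p.1 p.2) s.1.1)) 𝔰))
          (𝒯.xi (𝒯.map (fun s :
          {p : T (T X × X) × (T X × A) // 𝒯.map Prod.snd p.1 = Prod.fst p.2} =>
          a.rel s.1.2.1 (h s.1.2.2)) 𝔰)) := xi_map_tens _ _ 𝔰
    rw [e3]
    have e4 : 𝒯.xi (𝒯.map (fun s :
        {p : T (T X × X) × (T X × A) // 𝒯.map Prod.snd p.1 = Prod.fst p.2} =>
        𝒯.xi (𝒯.map (fun p : T X × X => a.rel p.1 p.2) s.1.1)) 𝔰) =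
        𝒯.xi (𝒯.map (fun p : T X × X => a.rel p.1 p.2) 𝔱) := by
      have e5 : 𝒯.map (fun s :
          {p : T (T X × X) × (T X × A) // 𝒯.map Prod.snd p.1 = Prod.fst p.2} =>
          𝒯.xi (𝒯.map (fun p : T X × X => a.rel p.1 p.2) s.1.1)) 𝔰 =
          𝒯.map (fun v : T (T X × X) => 𝒯.xi (𝒯.map (fun p : T X × X => a.rel p.1 p.2) v))
            (𝒯.map (fun s => s.1.1) 𝔰) := by rw [map_map]
      rw [e5, hs1, xi_map_xi_map, hB]
    have e6 : 𝒯.map (fun s :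
        {p : T (T X × X) × (T X × A) // 𝒯.map Prod.snd p.1 = Prod.fst p.2} =>
        a.rel s.1.2.1 (h s.1.2.2)) 𝔰 =
        𝒯.map (fun p : T X × A => a.rel p.1 (h p.2)) w' := by
      rw [← hs2, map_map]
    rw [e4, e6]
  calc _ = 𝒯.tens (𝒯.tens (𝒯.xi (𝒯.map (fun p : T X × X => a.rel p.1 p.2) 𝔱))
        (𝒯.xi (𝒯.map (fun p : T X × A => a.rel p.1 (h p.2)) w')))
        (ψ (𝒯.map Prod.snd w') z) := (𝒯.tens_assoc _ _ _).symm
  _ ≤ 𝒯.tens (𝒯.xi (𝒯.map (fun p : T X × A => a.rel p.1 (h p.2)) w''))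
        (ψ (𝒯.map Prod.snd w'') z) := by rw [hsnd]; exact tens_mono_left hval
  _ ≤ _ := by rw [← hm]; exact le_colimP w'' rfl

end Colim2


section Colim3

variable {V : Type u} [CompleteLattice V] {T : Type u → Type u}
variable {𝒯 : TopTheory V T} {X A Z : Type u} {a : 𝒯.TCatStr X} {h : A → X}
  {ψ : T A → Z → V} {cs : 𝒯.TCatStr Z}

/-- `colimP z` is a presheaf. -/
lemma colimP_presheaf (hψ2 : ∀ (𝔞 : T A) (z : Z), 𝒯.kleisli cs.rel ψ 𝔞 z ≤ ψ 𝔞 z)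
    (z : Z) : IsPresheaf a (colimP 𝒯 a h ψ z) := by
  refine ⟨fun 𝔵₀ yy => ?_, fun 𝔵₀ yy => ?_⟩
  · refine iSup_le ?_
    rintro ⟨𝔛₀, rfl⟩
    refine iSup_le fun 𝔶 => ?_
    dsimp only
    rw [TopTheory.colimP, tens_iSup]
    refine iSup_le ?_
    rintro ⟨w', hw'⟩
    rw [TopTheory.Txi, tens_iSup_left]
    refine iSup_le ?_
    rintro ⟨𝔱, ht1, ht2⟩
    have hkey := colimP_rel (a := a) (h := h) (ψ := ψ) z 𝔱 w' (by rw [hw', ht2])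
    rw [ht1] at hkey
    exact hkey
  · refine iSup_le ?_
    rintro ⟨𝔛', rfl⟩
    refine iSup_le fun 𝔶' => ?_
    dsimp only
    rw [TopTheory.unitRel, tens_iSup]
    refine iSup_le fun he => ?_
    rw [tens_unit_right, TopTheory.Txi]
    refine iSup_le ?_
    rintro ⟨𝔱, ht1, ht2⟩
    have e1 : 𝒯.map (fun p : T X × PUnit.{u + 1} => colimP 𝒯 a h ψ z p.1) 𝔱 =
        𝒯.map (colimP 𝒯 a h ψ z) 𝔛' := by rw [← ht1, map_map]
    have hc : 𝒯.map (fun _ => PUnit.unit.{u + 1}) 𝔛' = 𝒯.e PUnit.unit := by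
      rw [← ht1, map_map]
      have e2 : 𝒯.map (fun p : T X × PUnit.{u + 1} => PUnit.unit) 𝔱 =
          𝒯.map (fun p : T X × PUnit.{u + 1} => p.2) 𝔱 :=
        map_congr (fun p => Subsingleton.elim _ _) 𝔱
      rw [e2, ht2, he]
    exact le_trans (le_of_eq (congrArg 𝒯.xi e1)) (colimP_sigma hψ2 z 𝔛' hc)

/-- Fiber presentation of `colimP` in two variables. -/
lemma colimP_fib :
    (fun p : T X × Z => colimP 𝒯 a h ψ p.2 p.1) =
      (fun p : T X × Z =>
        ⨆ d : {d : T (T X × A) × Z // ((𝒯.m (𝒯.map Prod.fst d.1) : T X), d.2) = p},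
          𝒯.tens (𝒯.xi (𝒯.map (fun pp : T X × A => a.rel pp.1 (h pp.2)) d.1.1))
            (ψ (𝒯.map Prod.snd d.1.1) d.1.2)) := by
  funext p
  apply le_antisymm
  · refine iSup_le ?_
    rintro ⟨w, hw⟩
    exact le_iSup_of_le ⟨(w, p.2), by rw [hw]⟩ (le_refl _)
  · refine iSup_le ?_
    rintro ⟨⟨w, z'⟩, hd⟩
    cases hd
    exact le_colimP w rfl

/-- Decomposition of an element of `T V` lying over `T (colimP)`. -/
lemma colimP_dec (𝔷 : T Z) (q : T (T X × (T X → V)))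
    (hq : 𝒯.map Prod.snd q = 𝒯.map (fun z => colimP 𝒯 a h ψ z) 𝔷) :
    𝒯.xi (𝒯.map (fun p : T X × (T X → V) => p.2 p.1) q) ≤
      ⨆ c : {c : T (T X × A) × T (T A) //
        𝒯.m (𝒯.map Prod.fst c.1) = 𝒯.m (𝒯.map Prod.fst q) ∧
        𝒯.m c.2 = 𝒯.map Prod.snd c.1},
        𝒯.tens (𝒯.xi (𝒯.map (fun p : T X × A => a.rel p.1 (h p.2)) c.1.1))
          (𝒯.Txi ψ c.1.2 𝔷) := by
  obtain ⟨𝔱, h1, h2⟩ := 𝒯.map_bc Prod.snd (fun z => colimP 𝒯 a h ψ z) q 𝔷 hq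
  set 𝔳 : T (T X × Z) := 𝒯.map
    (fun w : {p : (T X × (T X → V)) × Z // Prod.snd p.1 = colimP 𝒯 a h ψ p.2} =>
      ((w.1.1.1 : T X), w.1.2)) 𝔱 with hvdef
  have hv1 : 𝒯.map Prod.fst 𝔳 = 𝒯.map Prod.fst q := by
    rw [hvdef, map_map, ← h1, map_map]
  have hv2 : 𝒯.map Prod.snd 𝔳 = 𝔷 := by
    rw [hvdef, map_map, ← h2]
  have hev : 𝒯.map (fun p : T X × (T X → V) => p.2 p.1) q =
      𝒯.map (fun p : T X × Z => colimP 𝒯 a h ψ p.2 p.1) 𝔳 := by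
    rw [← h1, map_map, hvdef, map_map]
    exact map_congr (fun w => congrFun w.2 w.1.1.1) 𝔱
  rw [hev, colimP_fib]
  have key : 𝒯.xi (𝒯.map (fun p : T X × Z =>
      ⨆ d : {d : T (T X × A) × Z // ((𝒯.m (𝒯.map Prod.fst d.1) : T X), d.2) = p},
        𝒯.tens (𝒯.xi (𝒯.map (fun pp : T X × A => a.rel pp.1 (h pp.2)) d.1.1))
          (ψ (𝒯.map Prod.snd d.1.1) d.1.2)) 𝔳) =
      ⨆ 𝔡 : {𝔡 : T (T (T X × A) × Z) //
        𝒯.map (fun d : T (T X × A) × Z => ((𝒯.m (𝒯.map Prod.fst d.1) : T X), d.2)) 𝔡 = 𝔳},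
        𝒯.xi (𝒯.map (fun d : T (T X × A) × Z =>
          𝒯.tens (𝒯.xi (𝒯.map (fun pp : T X × A => a.rel pp.1 (h pp.2)) d.1))
            (ψ (𝒯.map Prod.snd d.1) d.2)) 𝔡.1) :=
    (𝒯.xi_nat (fun d : T (T X × A) × Z => ((𝒯.m (𝒯.map Prod.fst d.1) : T X), d.2))
      (fun d : T (T X × A) × Z =>
        𝒯.tens (𝒯.xi (𝒯.map (fun pp : T X × A => a.rel pp.1 (h pp.2)) d.1))
          (ψ (𝒯.map Prod.snd d.1) d.2)) 𝔳).symm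
  refine le_trans (le_of_eq key) (iSup_le ?_)
  rintro ⟨𝔡, h𝔡⟩
  have ht : 𝒯.xi (𝒯.map (fun d : T (T X × A) × Z =>
      𝒯.tens (𝒯.xi (𝒯.map (fun pp : T X × A => a.rel pp.1 (h pp.2)) d.1))
        (ψ (𝒯.map Prod.snd d.1) d.2)) 𝔡) =
      𝒯.tens (𝒯.xi (𝒯.map (fun d : T (T X × A) × Z =>
          𝒯.xi (𝒯.map (fun pp : T X × A => a.rel pp.1 (h pp.2)) d.1)) 𝔡))
        (𝒯.xi (𝒯.map (fun d : T (T X × A) × Z => ψ (𝒯.map Prod.snd d.1) d.2) 𝔡)) :=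
    xi_map_tens _ _ 𝔡
  have e5 : 𝒯.xi (𝒯.map (fun d : T (T X × A) × Z =>
      𝒯.xi (𝒯.map (fun pp : T X × A => a.rel pp.1 (h pp.2)) d.1)) 𝔡) =
      𝒯.xi (𝒯.map (fun pp : T X × A => a.rel pp.1 (h pp.2))
        (𝒯.m (𝒯.map (fun d : T (T X × A) × Z => d.1) 𝔡))) := by
    have e5a : 𝒯.map (fun d : T (T X × A) × Z =>
        𝒯.xi (𝒯.map (fun pp : T X × A => a.rel pp.1 (h pp.2)) d.1)) 𝔡 =
        𝒯.map (fun w : T (T X × A) =>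
          𝒯.xi (𝒯.map (fun pp : T X × A => a.rel pp.1 (h pp.2)) w))
          (𝒯.map (fun d : T (T X × A) × Z => d.1) 𝔡) := by rw [map_map]
    rw [e5a, xi_map_xi_map]
  have hs2 : 𝒯.xi (𝒯.map (fun d : T (T X × A) × Z => ψ (𝒯.map Prod.snd d.1) d.2) 𝔡) ≤
      𝒯.Txi ψ (𝒯.map (fun d : T (T X × A) × Z => 𝒯.map Prod.snd d.1) 𝔡)
        (𝒯.map (fun d : T (T X × A) × Z => d.2) 𝔡) :=
    xi_map_le_Txi ψ _ _ 𝔡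
  have hsndz : 𝒯.map (fun d : T (T X × A) × Z => d.2) 𝔡 = 𝔷 := by
    have e6 : 𝒯.map (fun d : T (T X × A) × Z => d.2) 𝔡 = 𝒯.map Prod.snd
        (𝒯.map (fun d : T (T X × A) × Z => ((𝒯.m (𝒯.map Prod.fst d.1) : T X), d.2)) 𝔡) := by
      rw [map_map]
    rw [e6, h𝔡, hv2]
  have c1 : 𝒯.m (𝒯.map Prod.fst (𝒯.m (𝒯.map (fun d : T (T X × A) × Z => d.1) 𝔡))) =
      𝒯.m (𝒯.map Prod.fst q) := by
    calc 𝒯.m (𝒯.map Prod.fst (𝒯.m (𝒯.map (fun d : T (T X × A) × Z => d.1) 𝔡)))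
        = 𝒯.m (𝒯.m (𝒯.map (𝒯.map Prod.fst) (𝒯.map (fun d : T (T X × A) × Z => d.1) 𝔡))) := by
          rw [𝒯.m_nat]
      _ = 𝒯.m (𝒯.map 𝒯.m (𝒯.map (𝒯.map Prod.fst) (𝒯.map (fun d : T (T X × A) × Z => d.1) 𝔡))) := by
          rw [𝒯.m_assoc]
      _ = 𝒯.m (𝒯.map 𝒯.m (𝒯.map (fun d : T (T X × A) × Z => 𝒯.map Prod.fst d.1) 𝔡)) := by
          rw [map_map' (fun d => rfl) 𝔡]
      _ = 𝒯.m (𝒯.map (fun d : T (T X × A) × Z => 𝒯.m (𝒯.map Prod.fst d.1)) 𝔡) := by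
          rw [map_map' (fun d => rfl) 𝔡]
      _ = 𝒯.m (𝒯.map Prod.fst
          (𝒯.map (fun d : T (T X × A) × Z => ((𝒯.m (𝒯.map Prod.fst d.1) : T X), d.2)) 𝔡)) := by
          rw [map_map' (fun d => rfl) 𝔡]
      _ = 𝒯.m (𝒯.map Prod.fst q) := by rw [h𝔡, hv1]
  have c2 : 𝒯.m (𝒯.map (fun d : T (T X × A) × Z => 𝒯.map Prod.snd d.1) 𝔡) =
      𝒯.map Prod.snd (𝒯.m (𝒯.map (fun d : T (T X × A) × Z => d.1) 𝔡)) := by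
    have e8 : 𝒯.map (fun d : T (T X × A) × Z => 𝒯.map Prod.snd d.1) 𝔡 =
        𝒯.map (𝒯.map Prod.snd) (𝒯.map (fun d : T (T X × A) × Z => d.1) 𝔡) := by
      rw [map_map]
    rw [e8, ← 𝒯.m_nat]
  refine le_trans (le_of_eq ht) ?_
  rw [e5]
  refine le_trans (tens_mono_right hs2) ?_
  rw [hsndz]
  exact le_iSup_of_le ⟨(𝒯.m (𝒯.map (fun d : T (T X × A) × Z => d.1) 𝔡),
    𝒯.map (fun d : T (T X × A) × Z => 𝒯.map Prod.snd d.1) 𝔡), c1, c2⟩ (le_refl _)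

end Colim3


section Main

variable {V : Type u} [CompleteLattice V] {T : Type u → Type u} {𝒯 : TopTheory V T}

lemma Txi_functor {A B : Type u} {as : 𝒯.TCatStr A} {bs : 𝒯.TCatStr B} {i : A → B}
    (hi : IsTFunctor as bs i) (𝔄 : T (T A)) (𝔞 : T A) :
    𝒯.Txi as.rel 𝔄 𝔞 ≤ 𝒯.Txi bs.rel (𝒯.map (𝒯.map i) 𝔄) (𝒯.map i 𝔞) := by
  refine iSup_le ?_
  rintro ⟨𝔱, ht1, ht2⟩
  have h1 : 𝒯.xi (𝒯.map (fun p : T A × A => as.rel p.1 p.2) 𝔱) ≤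
      𝒯.xi (𝒯.map (fun p : T A × A => bs.rel (𝒯.map i p.1) (i p.2)) 𝔱) :=
    𝒯.xi_mono _ _ (fun p => hi p.1 p.2) 𝔱
  refine le_trans h1 ?_
  have h2 := xi_map_le_Txi (𝒯 := 𝒯) bs.rel (fun p : T A × A => 𝒯.map i p.1)
    (fun p => i p.2) 𝔱
  have e1 : 𝒯.map (fun p : T A × A => 𝒯.map i p.1) 𝔱 = 𝒯.map (𝒯.map i) 𝔄 := by
    rw [← ht1]; exact (map_map' (fun p => rfl) 𝔱).symm
  have e2 : 𝒯.map (fun p : T A × A => i p.2) 𝔱 = 𝒯.map i 𝔞 := by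
    rw [← ht2]; exact (map_map' (fun p => rfl) 𝔱).symm
  rw [e1, e2] at h2
  exact h2

lemma Txi_modStar {A B : Type u} {bs : 𝒯.TCatStr B} {i : A → B}
    (𝔄 : T (T A)) (𝔟 : T B) :
    𝒯.Txi (modStar bs i) 𝔄 𝔟 ≤ 𝒯.Txi bs.rel (𝒯.map (𝒯.map i) 𝔄) 𝔟 := by
  refine iSup_le ?_
  rintro ⟨𝔱, ht1, ht2⟩
  have h2 := xi_map_le_Txi (𝒯 := 𝒯) bs.rel (fun p : T A × B => 𝒯.map i p.1) Prod.snd 𝔱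
  have e1 : 𝒯.map (fun p : T A × B => 𝒯.map i p.1) 𝔱 = 𝒯.map (𝒯.map i) 𝔄 := by
    rw [← ht1]; exact (map_map' (fun p => rfl) 𝔱).symm
  rw [e1, ht2] at h2
  exact h2

/-- (iii) ⇒ (iv): a left adjoint of Yoneda yields all weighted colimits. -/
lemma adjoint_cocomplete {X : Type u} {a : 𝒯.TCatStr X} {hs : 𝒯.TCatStr (Hat a)}
    (hhs : IsHatStr a hs) {y : X → Hat a} (hy : IsYoneda a y)
    {S : Hat a → X} (hS : IsTFunctor hs a S) (hadj : IsAdjunction hs a S y) :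
    Cocomplete a := by
  intro A Z as cs h hh ψ hψ
  have hψ2 : ∀ (𝔞 : T A) (z : Z), 𝒯.kleisli cs.rel ψ 𝔞 z ≤ ψ 𝔞 z := hψ.2
  refine ⟨fun z => S (⟨colimP 𝒯 a h ψ z, colimP_presheaf hψ2 z⟩ : Hat a), ?_, ?_⟩
  · -- 𝒯-functoriality
    intro 𝔷 z
    have hP : cs.rel 𝔷 z ≤ hs.rel
        (𝒯.map (fun z => (⟨colimP 𝒯 a h ψ z, colimP_presheaf hψ2 z⟩ : Hat a)) 𝔷)
        ⟨colimP 𝒯 a h ψ z, colimP_presheaf hψ2 z⟩ := by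
      erw [hhs]
      have e1 : 𝒯.map Subtype.val
          (𝒯.map (fun z => (⟨colimP 𝒯 a h ψ z, colimP_presheaf hψ2 z⟩ : Hat a)) 𝔷) =
          𝒯.map (fun z => colimP 𝒯 a h ψ z) 𝔷 := map_map' (fun z => rfl) 𝔷
      erw [e1]
      refine le_iInf ?_
      rintro ⟨q, hq⟩
      refine le_ihom ?_
      refine le_trans (tens_mono_left (colimP_dec 𝔷 q hq)) ?_
      rw [tens_iSup_left]
      refine iSup_le ?_
      rintro ⟨⟨𝔚, 𝔄⟩, c1, c2⟩
      dsimp only at c1 c2 ⊢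
      rw [𝒯.tens_assoc]
      have h6 : 𝒯.tens (𝒯.Txi ψ 𝔄 𝔷) (cs.rel 𝔷 z) ≤ ψ (𝒯.map Prod.snd 𝔚) z := by
        rw [← c2]
        exact le_trans (le_kleisli _ _ _ _ _) (hψ2 _ z)
      refine le_trans (tens_mono_right h6) ?_
      rw [← c1]
      exact le_colimP 𝔚 rfl
    refine le_trans hP (le_trans (hS _ _) (le_of_eq ?_))
    erw [map_map]
  · -- colimit property
    intro 𝔷 x
    show a.rel (𝒯.map (fun z => S ⟨colimP 𝒯 a h ψ z, colimP_presheaf hψ2 z⟩) 𝔷) x = _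
    have e0 : 𝒯.map (fun z => S (⟨colimP 𝒯 a h ψ z, colimP_presheaf hψ2 z⟩ : Hat a)) 𝔷 =
        𝒯.map S (𝒯.map (fun z => (⟨colimP 𝒯 a h ψ z, colimP_presheaf hψ2 z⟩ : Hat a)) 𝔷) :=
      (map_map S _ 𝔷).symm
    rw [e0, adj_star hhs hy hS hadj _ x, hhs]
    have e1 : 𝒯.map Subtype.val
        (𝒯.map (fun z => (⟨colimP 𝒯 a h ψ z, colimP_presheaf hψ2 z⟩ : Hat a)) 𝔷) =
        𝒯.map (fun z => colimP 𝒯 a h ψ z) 𝔷 := map_map' (fun z => rfl) 𝔷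
    erw [e1]
    apply le_antisymm
    · -- powRel ≤ extend
      refine le_iInf fun 𝔞 => ?_
      refine le_ihom ?_
      rw [tens_iSup_left]
      refine iSup_le ?_
      rintro ⟨𝔄, h𝔄⟩
      rw [TopTheory.Txi, tens_iSup_left]
      refine iSup_le ?_
      rintro ⟨𝔴₀, hw1, hw2⟩
      have hq : 𝒯.map Prod.snd (𝒯.map (fun p : T A × Z =>
          ((𝒯.map h p.1 : T X), colimP 𝒯 a h ψ p.2)) 𝔴₀) =
          𝒯.map (fun z => colimP 𝒯 a h ψ z) 𝔷 := by
        have s1 : 𝒯.map Prod.snd (𝒯.map (fun p : T A × Z =>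
            ((𝒯.map h p.1 : T X), colimP 𝒯 a h ψ p.2)) 𝔴₀) =
            𝒯.map (fun p : T A × Z => colimP 𝒯 a h ψ p.2) 𝔴₀ := map_map' (fun p => rfl) 𝔴₀
        have s2 : 𝒯.map (fun z => colimP 𝒯 a h ψ z) (𝒯.map Prod.snd 𝔴₀) =
            𝒯.map (fun p : T A × Z => colimP 𝒯 a h ψ p.2) 𝔴₀ := map_map' (fun p => rfl) 𝔴₀
        rw [s1, ← s2, hw2]
      have hpow := iInf_le (fun 𝔮 : {q' : T (T X × (T X → V)) //
          𝒯.map Prod.snd q' = 𝒯.map (fun z => colimP 𝒯 a h ψ z) 𝔷} =>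
          𝒯.ihom (𝒯.xi (𝒯.map (fun p : T X × (T X → V) => p.2 p.1) 𝔮.1))
            ((y x).1 (𝒯.m (𝒯.map Prod.fst 𝔮.1))))
        ⟨𝒯.map (fun p : T A × Z => ((𝒯.map h p.1 : T X), colimP 𝒯 a h ψ p.2)) 𝔴₀, hq⟩
      have hmq : 𝒯.m (𝒯.map Prod.fst (𝒯.map (fun p : T A × Z =>
          ((𝒯.map h p.1 : T X), colimP 𝒯 a h ψ p.2)) 𝔴₀)) = 𝒯.map h 𝔞 := by
        have s3 : 𝒯.map Prod.fst (𝒯.map (fun p : T A × Z =>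
            ((𝒯.map h p.1 : T X), colimP 𝒯 a h ψ p.2)) 𝔴₀) =
            𝒯.map (fun p : T A × Z => (𝒯.map h p.1 : T X)) 𝔴₀ := map_map' (fun p => rfl) 𝔴₀
        have s4 : 𝒯.map (𝒯.map h) (𝒯.map Prod.fst 𝔴₀) =
            𝒯.map (fun p : T A × Z => (𝒯.map h p.1 : T X)) 𝔴₀ := map_map' (fun p => rfl) 𝔴₀
        rw [s3, ← s4, hw1, ← 𝒯.m_nat, h𝔄]
      have hle : 𝒯.xi (𝒯.map (fun p : T A × Z => ψ p.1 p.2) 𝔴₀) ≤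
          𝒯.xi (𝒯.map (fun p : T X × (T X → V) => p.2 p.1)
            (𝒯.map (fun p : T A × Z => ((𝒯.map h p.1 : T X), colimP 𝒯 a h ψ p.2)) 𝔴₀)) := by
        have s5 : 𝒯.map (fun p : T X × (T X → V) => p.2 p.1)
            (𝒯.map (fun p : T A × Z => ((𝒯.map h p.1 : T X), colimP 𝒯 a h ψ p.2)) 𝔴₀) =
            𝒯.map (fun p : T A × Z => colimP 𝒯 a h ψ p.2 (𝒯.map h p.1)) 𝔴₀ :=
          map_map' (fun p => rfl) 𝔴₀
        rw [s5]
        exact 𝒯.xi_mono _ _ (fun p => weight_le_colimP p.1 p.2) 𝔴₀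
      refine tens_le_of_le_ihom hle (le_trans hpow (le_of_eq ?_))
      rw [hmq, hy]
      rfl
    · -- extend ≤ powRel
      refine le_iInf ?_
      rintro ⟨q, hq⟩
      refine le_ihom ?_
      refine le_trans (tens_mono_left (colimP_dec 𝔷 q hq)) ?_
      rw [tens_iSup_left]
      refine iSup_le ?_
      rintro ⟨⟨𝔚, 𝔄⟩, c1, c2⟩
      dsimp only at c1 c2 ⊢
      rw [𝒯.tens_assoc]
      have hE : 𝒯.extend (modStar a h) ψ 𝔷 x ≤
          𝒯.ihom (⨆ 𝔛 : {𝔛 : T (T A) // 𝒯.m 𝔛 = 𝒯.m 𝔄}, 𝒯.Txi ψ 𝔛.1 𝔷)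
            (modStar a h (𝒯.m 𝔄) x) := iInf_le _ (𝒯.m 𝔄)
      have h6 : 𝒯.tens (𝒯.Txi ψ 𝔄 𝔷) (𝒯.extend (modStar a h) ψ 𝔷 x) ≤
          modStar a h (𝒯.m 𝔄) x :=
        tens_le_of_le_ihom (le_iSup (fun 𝔛 : {𝔛 : T (T A) // 𝒯.m 𝔛 = 𝒯.m 𝔄} =>
          𝒯.Txi ψ 𝔛.1 𝔷) ⟨𝔄, rfl⟩) hE
      refine le_trans (tens_mono_right h6) ?_
      have h7 : 𝒯.xi (𝒯.map (fun p : T X × A => a.rel p.1 (h p.2)) 𝔚) ≤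
          𝒯.Txi a.rel (𝒯.map Prod.fst 𝔚) (𝒯.map h (𝒯.m 𝔄)) := by
        rw [c2]
        have h8 := xi_map_le_Txi (𝒯 := 𝒯) a.rel Prod.fst (fun p : T X × A => h p.2) 𝔚
        rw [show 𝒯.map (fun p : T X × A => h p.2) 𝔚 = 𝒯.map h (𝒯.map Prod.snd 𝔚) from
          (map_map' (fun p => rfl) 𝔚).symm] at h8
        exact h8
      refine le_trans (tens_mono_left h7) ?_
      refine le_trans (comp_le a _ _ x) ?_
      rw [hy, c1]

/-- (iv) ⇒ (i): cocomplete implies injective. -/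
lemma cocomplete_injective {X : Type u} {a : 𝒯.TCatStr X} (hc : Cocomplete a) :
    Injective a := by
  intro A B as bs f i hf hi hiff
  have hmod : 𝒯.IsTModRel as.rel bs.rel (modStar bs i) := by
    constructor
    · intro 𝔞₀ b₀
      refine iSup_le ?_
      rintro ⟨𝔄, rfl⟩
      refine iSup_le fun 𝔞' => ?_
      refine le_trans (tens_mono_left (Txi_functor hi 𝔄 𝔞')) ?_
      refine le_trans (comp_le bs _ _ _) ?_
      rw [show 𝒯.m (𝒯.map (𝒯.map i) 𝔄) = 𝒯.map i (𝒯.m 𝔄) from (𝒯.m_nat i 𝔄).symm]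
      exact le_rfl
    · intro 𝔞₀ b₀
      refine iSup_le ?_
      rintro ⟨𝔄, rfl⟩
      refine iSup_le fun 𝔟 => ?_
      refine le_trans (tens_mono_left (Txi_modStar 𝔄 𝔟)) ?_
      refine le_trans (comp_le bs _ _ _) ?_
      rw [show 𝒯.m (𝒯.map (𝒯.map i) 𝔄) = 𝒯.map i (𝒯.m 𝔄) from (𝒯.m_nat i 𝔄).symm]
      exact le_rfl
  obtain ⟨g, hg, hcol⟩ := hc A B as bs f hf (modStar bs i) hmod
  have key : ∀ (𝔞 : T A) (x : X),
      𝒯.extend (modStar a f) (modStar bs i) (𝒯.map i 𝔞) x = a.rel (𝒯.map f 𝔞) x := by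
    intro 𝔞 x
    apply le_antisymm
    · have hW : 𝒯.unit ≤ ⨆ 𝔄 : {𝔄 : T (T A) // 𝒯.m 𝔄 = 𝔞},
          𝒯.Txi (modStar bs i) 𝔄.1 (𝒯.map i 𝔞) := by
        refine le_trans ?_ (le_iSup (fun 𝔄 : {𝔄 : T (T A) // 𝒯.m 𝔄 = 𝔞} =>
          𝒯.Txi (modStar bs i) 𝔄.1 (𝒯.map i 𝔞)) ⟨𝒯.map 𝒯.e 𝔞, 𝒯.m_map_e 𝔞⟩)
        have h0 : 𝒯.unit ≤ 𝒯.xi (𝒯.map (fun a' => bs.rel (𝒯.map i (𝒯.e a')) (i a')) 𝔞) := by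
          refine unit_le_xi_map (fun a' => ?_) 𝔞
          rw [𝒯.e_nat]
          exact bs.le_refl (i a')
        exact le_trans h0 (xi_map_le_Txi (𝒯 := 𝒯) (modStar bs i)
          (fun a' : A => (𝒯.e a' : T A)) i 𝔞)
      exact le_trans (iInf_le _ 𝔞) (ihom_le_of_unit_le hW)
    · refine le_iInf fun 𝔞' => ?_
      refine le_ihom ?_
      rw [tens_iSup_left]
      refine iSup_le ?_
      rintro ⟨𝔄', h𝔄'⟩
      rw [TopTheory.Txi, tens_iSup_left]
      refine iSup_le ?_
      rintro ⟨𝔱, ht1, ht2⟩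
      obtain ⟨𝔰, hs1, hs2⟩ := 𝒯.map_bc Prod.snd i 𝔱 𝔞 ht2
      have hval : 𝒯.map (fun p : T A × B => modStar bs i p.1 p.2) 𝔱 =
          𝒯.map (fun s : {p : (T A × B) × A // Prod.snd p.1 = i p.2} =>
            as.rel s.1.1.1 s.1.2) 𝔰 := by
        rw [← hs1]
        exact map_map' (fun s => by
          show bs.rel (𝒯.map i s.1.1.1) s.1.1.2 = as.rel s.1.1.1 s.1.2
          rw [show s.1.1.2 = i s.1.2 from s.2]
          exact (hiff s.1.1.1 s.1.2).symm) 𝔰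
      have hTxi : 𝒯.xi (𝒯.map (fun p : T A × B => modStar bs i p.1 p.2) 𝔱) ≤
          𝒯.Txi as.rel 𝔄' 𝔞 := by
        rw [hval]
        have h2 := xi_map_le_Txi (𝒯 := 𝒯) as.rel
          (fun s : {p : (T A × B) × A // Prod.snd p.1 = i p.2} => s.1.1.1)
          (fun s => s.1.2) 𝔰
        have ht1' : 𝒯.map Prod.fst 𝔱 = 𝔄' := ht1
        have e1 : 𝒯.map (fun s : {p : (T A × B) × A // Prod.snd p.1 = i p.2} =>
            s.1.1.1) 𝔰 = 𝔄' := by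
          rw [← ht1', ← hs1]
          exact (map_map' (fun s => rfl) 𝔰).symm
        rw [e1, hs2] at h2
        exact h2
      refine le_trans (tens_mono_left hTxi) ?_
      refine le_trans (tens_mono_left (Txi_functor hf 𝔄' 𝔞)) ?_
      refine le_trans (comp_le a _ _ _) ?_
      rw [show 𝒯.m (𝒯.map (𝒯.map f) 𝔄') = 𝒯.map f (𝒯.m 𝔄') from (𝒯.m_nat f 𝔄').symm, h𝔄']
      exact le_rfl
  refine ⟨g, hg, ?_⟩
  have hstar : ∀ (𝔞 : T A) (x : X),
      a.rel (𝒯.map (fun a' => g (i a')) 𝔞) x = a.rel (𝒯.map f 𝔞) x := by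
    intro 𝔞 x
    have e0 : 𝒯.map (fun a' => g (i a')) 𝔞 = 𝒯.map g (𝒯.map i 𝔞) := (map_map g i 𝔞).symm
    rw [e0]
    exact (hcol (𝒯.map i 𝔞) x).trans (key 𝔞 x)
  have h1 : ∀ (a₀ : A) (x : X), a.rel (𝒯.e (g (i a₀))) x = a.rel (𝒯.e (f a₀)) x := by
    intro a₀ x
    have h2 := hstar (𝒯.e a₀) x
    rw [𝒯.e_nat, 𝒯.e_nat] at h2
    exact h2
  intro 𝔶 a₀
  apply le_antisymm
  · refine rel_le_rel a ?_ 𝔶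
    rw [show (g ∘ i) a₀ = g (i a₀) from rfl, h1 a₀ (f a₀)]
    exact a.le_refl (f a₀)
  · refine rel_le_rel a ?_ 𝔶
    rw [show (g ∘ i) a₀ = g (i a₀) from rfl, ← h1 a₀ (g (i a₀))]
    exact a.le_refl (g (i a₀))

end Main


/-- Theorem 2.4. For a `𝒯`-category `X = (X,a)` the following are
equivalent: (i) `X` is injective (w.r.t. fully faithful `𝒯`-functors); (ii) the Yoneda
functor `y_X : X → X̂` has a left inverse `Sup_X` with `Sup_X · y_X ≅ 1_X`;
(iii) `y_X` has a left adjoint; (iv) `X` is cocomplete. -/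
theorem statement2 (𝒯 : TopTheory V T) {X : Type u} (a : 𝒯.TCatStr X)
    (hs : 𝒯.TCatStr (Hat a)) (hhs : IsHatStr a hs)
    (y : X → Hat a) (hy : IsYoneda a y) (hyf : IsTFunctor a hs y) :
    (Injective a ↔ ∃ S : Hat a → X, IsTFunctor hs a S ∧ FunEquiv a (S ∘ y) id) ∧
    (Injective a ↔ ∃ S : Hat a → X, IsTFunctor hs a S ∧ IsAdjunction hs a S y) ∧
    (Injective a ↔ Cocomplete a) := by
  have h12 : Injective a →
      ∃ S : Hat a → X, IsTFunctor hs a S ∧ FunEquiv a (S ∘ y) id := by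
    intro hinj
    obtain ⟨g, hg1, hg2⟩ := hinj X (Hat a) a hs id y
      (fun 𝔵 x => by rw [𝒯.map_id]; exact le_rfl) hyf (yoneda_ff hhs hy)
    exact ⟨g, hg1, hg2⟩
  have h23 : (∃ S : Hat a → X, IsTFunctor hs a S ∧ FunEquiv a (S ∘ y) id) →
      ∃ S : Hat a → X, IsTFunctor hs a S ∧ IsAdjunction hs a S y := by
    rintro ⟨S, hSf, hSe⟩
    have hunit : ∀ (ψ' : Hat a) (𝔵 : T X), ψ'.1 𝔵 ≤ a.rel 𝔵 (S ψ') := by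
      intro ψ' 𝔵
      rw [← yoneda hhs hy 𝔵 ψ']
      refine le_trans (hSf (𝒯.map y 𝔵) ψ') ?_
      rw [map_map S y 𝔵]
      exact rel_map_le a (f := fun x => S (y x))
        (fun x => le_trans (a.le_refl x) (le_of_eq (hSe (𝒯.e x) x).symm)) 𝔵 (S ψ')
    refine ⟨S, hSf, ?_, fun 𝔵 x => le_of_eq (hSe 𝔵 x)⟩
    intro 𝔭 ψ'
    refine hs_mono hhs (fun 𝔵 => ?_) 𝔭
    rw [hy (S ψ')]
    exact hunit ψ' 𝔵
  have h34 : (∃ S : Hat a → X, IsTFunctor hs a S ∧ IsAdjunction hs a S y) →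
      Cocomplete a := by
    rintro ⟨S, hSf, hadj⟩
    exact adjoint_cocomplete hhs hy hSf hadj
  have h41 : Cocomplete a → Injective a := fun hc => cocomplete_injective hc
  exact ⟨⟨h12, fun h => h41 (h34 (h23 h))⟩,
    ⟨fun h => h23 (h12 h), fun h => h41 (h34 h)⟩,
    ⟨fun h => h34 (h23 (h12 h)), h41⟩⟩


end TopTheory

end Paper
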